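/- Let T be a rooted binary tree with n ≥ 2 leaves. Then the CFN-MC polytope R_T has exactly F_n vertices: the set of distinct top-vectors of systems of disjoint paths in T has cardinality F_n, and this set is precisely the set of extreme points of R_T. -/

import Mathlib

open Pointwise

/-- A rooted binary tree on the finite vertex type `V`, presented by its parent function:
the root is its own parent, every vertex reaches the root by iterating the parent map,
every vertex has either no children (a leaf) or exactly two children, and the root has
exactly two children (so the root has degree 2, leaves have degree 1, and all other
vertices have degree 3). -/
structure RBT (V : Type) [Fintype V] [DecidableEq V] : Type where
  root : V
  parent : V → V
  parent_root : parent root = root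
  reaches : ∀ v : V, ∃ k : ℕ, parent^[k] v = root
  binary : ∀ v : V,
    Nat.card {u : V // parent u = v ∧ u ≠ v} = 0 ∨
      Nat.card {u : V // parent u = v ∧ u ≠ v} = 2
  root_binary : Nat.card {u : V // parent u = root ∧ u ≠ root} = 2

namespace RBT

variable {V : Type} [Fintype V] [DecidableEq V] (T : RBT V)

/-- `u` is a child of `v` in `T`. -/
def isChild (u v : V) : Prop := T.parent u = v ∧ u ≠ v

/-- A leaf of `T` is a vertex with no children. -/
def isLeaf (v : V) : Prop := ∀ u : V, T.parent u = v → u = v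

/-- An internal vertex of `T` is a vertex which is not a leaf. -/
def isInternal (v : V) : Prop := ¬ T.isLeaf v

instance : DecidablePred T.isLeaf := fun v =>
  decidable_of_iff (∀ u : V, T.parent u = v → u = v) Iff.rfl

instance : DecidablePred T.isInternal := fun v =>
  inferInstanceAs (Decidable (¬ T.isLeaf v))

/-- `u` is a (weak) descendant of `v`, i.e. `v` lies on the path from `u` to the root. -/
def desc (u v : V) : Prop := ∃ k : ℕ, T.parent^[k] u = v

/-- `u` is a strict descendant of `v`. -/
def strictDesc (u v : V) : Prop := T.desc u v ∧ u ≠ v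

/-- `u` and `v` are adjacent vertices of `T`. -/
def adjacent (u v : V) : Prop := T.isChild u v ∨ T.isChild v u

instance : DecidableRel T.isChild := fun u v =>
  decidable_of_iff (T.parent u = v ∧ u ≠ v) Iff.rfl

instance : DecidableRel T.adjacent := fun u v =>
  inferInstanceAs (Decidable (T.isChild u v ∨ T.isChild v u))

/-- The set of edges (each edge being labelled by its endpoint farther from the root)
on the path from `l` up to the root. -/
def upEdges (l : V) : Set V := {u : V | u ≠ T.root ∧ T.desc l u}

/-- The edge set of the unique path in `T` joining the two members of an unordered
pair of vertices (edges are labelled by their endpoint farther from the root). -/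
def pathEdges : Sym2 V → Set V :=
  Sym2.lift ⟨fun l₁ l₂ => symmDiff (T.upEdges l₁) (T.upEdges l₂), fun _ _ => symmDiff_comm _ _⟩

/-- `v` is the lowest common ancestor of `l₁` and `l₂`: it is an ancestor of both, and it
descends from every common ancestor.  Equivalently, `v` is the unique vertex of the path
from `l₁` to `l₂` which is an ancestor of every vertex of that path. -/
def isLCA (l₁ l₂ v : V) : Prop :=
  T.desc l₁ v ∧ T.desc l₂ v ∧ ∀ w : V, T.desc l₁ w → T.desc l₂ w → T.desc v w

/-- `v` is the top vertex of the path joining the two members of the unordered pair `p`. -/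
def isTopOf (v : V) : Sym2 V → Prop :=
  Sym2.lift ⟨fun l₁ l₂ => T.isLCA l₁ l₂ v, fun a b => by
    simp only [eq_iff_iff, isLCA]
    constructor <;> rintro ⟨h₁, h₂, h₃⟩ <;> exact ⟨h₂, h₁, fun w hw₁ hw₂ => h₃ w hw₂ hw₁⟩⟩

end RBT

/-- A system of disjoint paths in `T`: a finite set of unordered pairs of distinct leaves,
such that the unique paths in `T` joining the pairs are pairwise edge-disjoint. -/
structure PathSystem {V : Type} [Fintype V] [DecidableEq V] (T : RBT V) : Type where
  pairs : Finset (Sym2 V)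
  leaf_mem : ∀ p ∈ pairs, ∀ l ∈ p, T.isLeaf l
  not_diag : ∀ p ∈ pairs, ¬ p.IsDiag
  edge_disjoint : (pairs : Set (Sym2 V)).Pairwise fun p q =>
    Disjoint (T.pathEdges p) (T.pathEdges q)

namespace PathSystem

variable {V : Type} [Fintype V] [DecidableEq V] {T : RBT V}

/-- The top-set of a system of disjoint paths: the set of top vertices of its paths. -/
def topSet (P : PathSystem T) : Set V := {v : V | ∃ p ∈ P.pairs, T.isTopOf v p}

/-- The top-vector of a system of disjoint paths, as a point of `ℝ^{Int(T)}`: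
the 0/1 indicator vector of its top-set. -/
noncomputable def topVector (P : PathSystem T) : {v : V // T.isInternal v} → ℝ := fun v =>
  Set.indicator P.topSet (fun _ => (1 : ℝ)) (v : V)

end PathSystem

namespace RBT

variable {V : Type} [Fintype V] [DecidableEq V] (T : RBT V)

/-- The set of top-vectors of all systems of disjoint paths in `T`. -/
noncomputable def topVectors : Set ({v : V // T.isInternal v} → ℝ) :=
  Set.range fun P : PathSystem T => P.topVector

/-- The CFN-MC polytope `R_T ⊆ ℝ^{Int(T)}`: the convex hull of the top-vectors of all
systems of disjoint paths in `T`. -/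
noncomputable def cfnmcPolytope : Set ({v : V // T.isInternal v} → ℝ) :=
  convexHull ℝ T.topVectors

end RBT
namespace RBT

variable {V : Type} [Fintype V] [DecidableEq V] (T : RBT V)

noncomputable def dep (v : V) : ℕ := Nat.find (T.reaches v)

variable {T}

lemma dep_spec (v : V) : T.parent^[T.dep v] v = T.root := Nat.find_spec (T.reaches v)

lemma parent_eq_self_iff {v : V} : T.parent v = v ↔ v = T.root := by
  constructor
  · intro h
    obtain ⟨k, hk⟩ := T.reaches v
    have : ∀ j : ℕ, T.parent^[j] v = v := by
      intro j; induction j with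
      | zero => rfl
      | succ j ih => rw [Function.iterate_succ_apply', ih, h]
    rw [this k] at hk; exact hk
  · rintro rfl; exact T.parent_root

lemma dep_pos {v : V} (h : v ≠ T.root) : 0 < T.dep v := by
  rcases Nat.eq_zero_or_pos (T.dep v) with h0 | h0
  · exfalso; apply h; have := dep_spec (T := T) v; rwa [h0] at this
  · exact h0

lemma dep_parent {v : V} (h : v ≠ T.root) : T.dep (T.parent v) = T.dep v - 1 := by
  have hpos := dep_pos h
  have h1 : T.parent^[T.dep v - 1] (T.parent v) = T.root := by
    rw [← Function.iterate_succ_apply, Nat.succ_eq_add_one, Nat.sub_add_cancel hpos]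
    exact dep_spec v
  have hle : T.dep (T.parent v) ≤ T.dep v - 1 := Nat.find_le h1
  have h2 : T.parent^[T.dep (T.parent v) + 1] v = T.root := by
    rw [Function.iterate_succ_apply]; exact dep_spec _
  have hge : T.dep v ≤ T.dep (T.parent v) + 1 := Nat.find_le h2
  omega

lemma dep_parent_lt {v : V} (h : v ≠ T.root) : T.dep (T.parent v) < T.dep v := by
  have := dep_parent h; have := dep_pos h; omega

lemma desc_refl (v : V) : T.desc v v := ⟨0, rfl⟩

lemma desc_root (v : V) : T.desc v T.root := ⟨T.dep v, dep_spec v⟩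

lemma desc_trans {u v w : V} (h1 : T.desc u v) (h2 : T.desc v w) : T.desc u w := by
  obtain ⟨k, hk⟩ := h1; obtain ⟨j, hj⟩ := h2
  exact ⟨j + k, by rw [Function.iterate_add_apply, hk, hj]⟩

lemma desc_parent (v : V) : T.desc v (T.parent v) := ⟨1, rfl⟩

lemma iterate_root (j : ℕ) : T.parent^[j] T.root = T.root := by
  induction j with
  | zero => rfl
  | succ j ih => rw [Function.iterate_succ_apply, T.parent_root]; exact ih

lemma dep_le_aux : ∀ (k : ℕ) (u v : V), T.parent^[k] u = v → T.dep v ≤ T.dep u := by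
  intro k
  induction k with
  | zero => intro u v hk; simp only [Function.iterate_zero_apply] at hk; rw [hk]
  | succ k ih =>
    intro u v hk
    by_cases hr : u = T.root
    · subst hr; rw [iterate_root] at hk; rw [← hk]
    · rw [Function.iterate_succ_apply] at hk
      exact le_trans (ih _ _ hk) (le_of_lt (dep_parent_lt hr))

lemma dep_le_of_desc {u v : V} (h : T.desc u v) : T.dep v ≤ T.dep u := by
  obtain ⟨k, hk⟩ := h; exact dep_le_aux k u v hk

lemma dep_lt_of_strict {u v : V} (h : T.desc u v) (hne : u ≠ v) : T.dep v < T.dep u := by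
  obtain ⟨k, hk⟩ := h
  cases k with
  | zero => exact absurd hk hne
  | succ k =>
    by_cases hr : u = T.root
    · exfalso; apply hne; subst hr
      rw [iterate_root] at hk; exact hk
    · rw [Function.iterate_succ_apply] at hk
      exact lt_of_le_of_lt (dep_le_of_desc ⟨k, hk⟩) (dep_parent_lt hr)

lemma desc_antisymm {u v : V} (h1 : T.desc u v) (h2 : T.desc v u) : u = v := by
  by_contra hne
  have := dep_lt_of_strict h1 hne
  have := dep_lt_of_strict h2 (Ne.symm hne)
  omega

lemma eq_of_desc_dep_le {u v : V} (h : T.desc u v) (hd : T.dep u ≤ T.dep v) : u = v := by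
  by_contra hne; have := dep_lt_of_strict h hne; omega

lemma desc_comparable {u v w : V} (h1 : T.desc u v) (h2 : T.desc u w) :
    T.desc v w ∨ T.desc w v := by
  obtain ⟨k, hk⟩ := h1; obtain ⟨j, hj⟩ := h2
  rcases le_total k j with h | h
  · left; exact ⟨j - k, by rw [← hk, ← Function.iterate_add_apply, Nat.sub_add_cancel h, hj]⟩
  · right; exact ⟨k - j, by rw [← hj, ← Function.iterate_add_apply, Nat.sub_add_cancel h, hk]⟩

lemma exists_child_desc {u v : V} (h : T.desc u v) (hne : u ≠ v) :
    ∃ c : V, T.isChild c v ∧ T.desc u c := by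
  have hex : ∃ k, T.parent^[k] u = v := h
  set k := Nat.find hex with hkdef
  have hk : T.parent^[k] u = v := Nat.find_spec hex
  have hk0 : k ≠ 0 := by
    intro h0; rw [h0] at hk; exact hne hk
  refine ⟨T.parent^[k-1] u, ⟨?_, ?_⟩, ⟨k - 1, rfl⟩⟩
  · have h2 : T.parent^[(k-1)+1] u = v := by
      rw [Nat.sub_add_cancel (Nat.pos_of_ne_zero hk0)]; exact hk
    rw [Function.iterate_succ_apply'] at h2; exact h2
  · intro hc
    have := Nat.find_le (h := hex) hc
    omega

lemma child_ne_root {c v : V} (h : T.isChild c v) : c ≠ T.root := by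
  rintro rfl
  exact h.2 (by rw [← h.1, T.parent_root])

lemma desc_child {u c v : V} (hc : T.isChild c v) (h : T.desc u c) : T.desc u v :=
  desc_trans h ⟨1, hc.1⟩

lemma ne_of_desc_child {u c v : V} (hc : T.isChild c v) (h : T.desc u c) : u ≠ v := by
  rintro rfl
  exact hc.2 (desc_antisymm ⟨1, hc.1⟩ h)

lemma dep_child {c v : V} (hc : T.isChild c v) : T.dep c = T.dep v + 1 := by
  have h1 : T.dep v < T.dep c := dep_lt_of_strict ⟨1, hc.1⟩ hc.2
  have h2 : T.dep c ≤ T.dep v + 1 := Nat.find_le (by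
    rw [Function.iterate_succ_apply, hc.1]; exact dep_spec v)
  omega

end RBT
namespace RBT

variable {V : Type} [Fintype V] [DecidableEq V] {T : RBT V}

lemma isLeaf_iff_no_child {v : V} : T.isLeaf v ↔ ∀ c, ¬ T.isChild c v := by
  constructor
  · intro h c hc; exact hc.2 (h c hc.1)
  · intro h u hu
    by_contra hne; exact h u ⟨hu, hne⟩

lemma internal_children {v : V} (h : T.isInternal v) :
    ∃ c1 c2 : V, c1 ≠ c2 ∧ T.isChild c1 v ∧ T.isChild c2 v ∧
      ∀ c, T.isChild c v → c = c1 ∨ c = c2 := by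
  have hne : ∃ u : V, T.parent u = v ∧ u ≠ v := by
    by_contra hempty
    push_neg at hempty
    exact h (fun u hu => by
      by_contra hne; exact absurd (hempty u hu) (by simpa using hne))
  have hcard : Nat.card {u : V // T.parent u = v ∧ u ≠ v} = 2 := by
    rcases T.binary v with h0 | h2
    · exfalso
      obtain ⟨u, hu⟩ := hne
      have : Nonempty {u : V // T.parent u = v ∧ u ≠ v} := ⟨⟨u, hu⟩⟩
      have := Nat.card_pos (α := {u : V // T.parent u = v ∧ u ≠ v})
      omega
    · exact h2
  rw [Nat.card_eq_two_iff] at hcard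
  obtain ⟨⟨c1, hc1⟩, ⟨c2, hc2⟩, hne12, huniv⟩ := hcard
  refine ⟨c1, c2, ?_, hc1, hc2, ?_⟩
  · intro hq; exact hne12 (Subtype.ext hq)
  · intro c hc
    have : (⟨c, hc⟩ : {u : V // T.parent u = v ∧ u ≠ v}) ∈ ({⟨c1, hc1⟩, ⟨c2, hc2⟩} : Set _) := by
      rw [huniv]; trivial
    rcases this with h | h
    · left; exact congrArg Subtype.val h
    · right; exact congrArg Subtype.val h

lemma leaf_desc_eq {v u : V} (hl : T.isLeaf v) (h : T.desc u v) : u = v := by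
  by_contra hne
  obtain ⟨c, hc, _⟩ := exists_child_desc h hne
  exact (isLeaf_iff_no_child.1 hl c) hc

lemma dep_iterate {v : V} : ∀ m : ℕ, m ≤ T.dep v → T.dep (T.parent^[m] v) = T.dep v - m := by
  intro m
  induction m with
  | zero => intro _; rfl
  | succ m ih =>
    intro hm
    have hmle : m ≤ T.dep v := by omega
    have h1 : T.parent^[m] v ≠ T.root := by
      intro hroot
      have hle : T.dep v ≤ m := Nat.find_le (h := T.reaches v) hroot
      omega
    rw [Function.iterate_succ_apply', dep_parent h1, ih hmle]
    omega

lemma dep_lt_card (v : V) : T.dep v < Fintype.card V := by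
  have hinj : Function.Injective (fun i : Fin (T.dep v + 1) => T.parent^[(i : ℕ)] v) := by
    intro i j hij
    simp only at hij
    have e1 := dep_iterate (T := T) (v := v) i (by omega)
    have e2 := dep_iterate (T := T) (v := v) j (by omega)
    rw [hij] at e1
    rw [e2] at e1
    have hi := i.isLt
    have hj := j.isLt
    exact Fin.ext (by omega)
  have := Fintype.card_le_of_injective _ hinj
  simp only [Fintype.card_fin] at this
  omega

/-- Recursion principle on subtrees. -/
lemma child_induction {P : V → Prop}
    (h : ∀ v, (∀ c, T.isChild c v → P c) → P v) : ∀ v, P v := by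
  have key : ∀ (k : ℕ) (v : V), Fintype.card V - T.dep v ≤ k → P v := by
    intro k
    induction k with
    | zero =>
      intro v hv
      have := dep_lt_card (T := T) v
      omega
    | succ k ih =>
      intro v hv
      apply h
      intro c hc
      apply ih
      have h1 := dep_child hc
      have h2 := dep_lt_card (T := T) v
      omega
  intro v
  exact key _ v le_rfl

lemma exists_leaf_desc : ∀ v : V, ∃ l, T.isLeaf l ∧ T.desc l v := by
  apply child_induction
  intro v ih
  by_cases hl : T.isLeaf v
  · exact ⟨v, hl, desc_refl v⟩
  · obtain ⟨c1, c2, _, hc1, _, _⟩ := internal_children hl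
    obtain ⟨l, hl, hd⟩ := ih c1 hc1
    exact ⟨l, hl, desc_child hc1 hd⟩

lemma child_subtree_disjoint {v c1 c2 u : V} (hne : c1 ≠ c2)
    (hc1 : T.isChild c1 v) (hc2 : T.isChild c2 v)
    (h1 : T.desc u c1) (h2 : T.desc u c2) : False := by
  rcases desc_comparable h1 h2 with h | h
  · exact hne (eq_of_desc_dep_le h (by rw [dep_child hc1, dep_child hc2]))
  · exact hne (eq_of_desc_dep_le h (by rw [dep_child hc1, dep_child hc2])).symm

lemma desc_cases {v c1 c2 u : V}
    (hc1 : T.isChild c1 v) (hc2 : T.isChild c2 v)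
    (hcl : ∀ c, T.isChild c v → c = c1 ∨ c = c2)
    (h : T.desc u v) (hne : u ≠ v) : T.desc u c1 ∨ T.desc u c2 := by
  obtain ⟨c, hc, hd⟩ := exists_child_desc h hne
  rcases hcl c hc with rfl | rfl
  · exact Or.inl hd
  · exact Or.inr hd

lemma desc_child_of_between {c v l u : V} (hc : T.isChild c v) (hl : T.desc l c)
    (hu : T.desc l u) (huv : T.desc u v) (hne : u ≠ v) : T.desc u c := by
  rcases desc_comparable hu hl with h | h
  · exact h
  · have hd1 : T.dep v < T.dep u := dep_lt_of_strict huv hne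
    have hd2 : c = u := eq_of_desc_dep_le h (by rw [dep_child hc]; omega)
    rw [← hd2]; exact desc_refl c

end RBT
namespace RBT

variable {V : Type} [Fintype V] [DecidableEq V]

/-- there is a route from `c` down to a leaf avoiding `S`. -/
def avoid (T : RBT V) (S : Set V) (c : V) : Prop :=
  ∃ l, T.isLeaf l ∧ T.desc l c ∧ ∀ u, T.desc l u → T.desc u c → u ∉ S

/-- `S` is an admissible set of tops within the subtree rooted at `v`. -/
def adm (T : RBT V) (v : V) (S : Set V) : Prop :=
  (∀ u ∈ S, T.desc u v ∧ T.isInternal u) ∧ ∀ w ∈ S, ∀ c, T.isChild c w → T.avoid S c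

/-- `S` is admissible in the subtree at `v` and admits a free route from `v` down. -/
def fre (T : RBT V) (v : V) (S : Set V) : Prop := T.adm v S ∧ T.avoid S v

/-- number of leaves in the subtree at `v`. -/
noncomputable def nl (T : RBT V) (v : V) : ℕ := Nat.card {u : V // T.isLeaf u ∧ T.desc u v}

variable {T : RBT V}

lemma avoid_congr {S S' : Set V} {c : V} (h : ∀ u, T.desc u c → (u ∈ S ↔ u ∈ S')) :
    T.avoid S c ↔ T.avoid S' c := by
  constructor <;> rintro ⟨l, h1, h2, h3⟩ <;> refine ⟨l, h1, h2, fun u hu1 hu2 => ?_⟩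
  · rw [← h u hu2]; exact h3 u hu1 hu2
  · rw [h u hu2]; exact h3 u hu1 hu2

lemma avoid_leaf {S : Set V} {v : V} (hl : T.isLeaf v) : T.avoid S v ↔ v ∉ S := by
  constructor
  · rintro ⟨l, h1, h2, h3⟩
    exact h3 v h2 (desc_refl v)
  · intro hv
    refine ⟨v, hl, desc_refl v, fun u h1 h2 => ?_⟩
    rwa [desc_antisymm h2 h1]

section Split

variable {v c1 c2 : V} (hvint : T.isInternal v) (hc1 : T.isChild c1 v) (hc2 : T.isChild c2 v)
  (hne : c1 ≠ c2) (hcl : ∀ c, T.isChild c v → c = c1 ∨ c = c2)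

include hvint hc1 hc2 hne hcl

lemma avoid_internal {S : Set V} :
    T.avoid S v ↔ v ∉ S ∧ (T.avoid S c1 ∨ T.avoid S c2) := by
  constructor
  · rintro ⟨l, h1, h2, h3⟩
    have hlv : l ≠ v := fun h => hvint (h ▸ h1)
    refine ⟨h3 v h2 (desc_refl v), ?_⟩
    rcases desc_cases hc1 hc2 hcl h2 hlv with h | h
    · exact Or.inl ⟨l, h1, h, fun u hu1 hu2 => h3 u hu1 (desc_child hc1 hu2)⟩
    · exact Or.inr ⟨l, h1, h, fun u hu1 hu2 => h3 u hu1 (desc_child hc2 hu2)⟩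
  · rintro ⟨hv, h | h⟩ <;> obtain ⟨l, h1, h2, h3⟩ := h
    · refine ⟨l, h1, desc_child hc1 h2, fun u hu1 hu2 => ?_⟩
      by_cases huv : u = v
      · rwa [huv]
      · exact h3 u hu1 (desc_child_of_between hc1 h2 hu1 hu2 huv)
    · refine ⟨l, h1, desc_child hc2 h2, fun u hu1 hu2 => ?_⟩
      by_cases huv : u = v
      · rwa [huv]
      · exact h3 u hu1 (desc_child_of_between hc2 h2 hu1 hu2 huv)

end Split

lemma adm_leaf {v : V} (hl : T.isLeaf v) {S : Set V} : T.adm v S ↔ S = ∅ := by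
  constructor
  · intro h
    ext u
    simp only [Set.mem_empty_iff_false, iff_false]
    intro hu
    have h1 := (h.1 u hu).1
    have h2 := (h.1 u hu).2
    exact h2 (leaf_desc_eq hl h1 ▸ hl)
  · rintro rfl
    exact ⟨fun u hu => hu.elim, fun w hw => hw.elim⟩

lemma fre_leaf {v : V} (hl : T.isLeaf v) {S : Set V} : T.fre v S ↔ S = ∅ := by
  constructor
  · intro h; exact (adm_leaf hl).1 h.1
  · rintro rfl
    exact ⟨(adm_leaf hl).2 rfl, (avoid_leaf hl).2 (fun h => h)⟩

lemma adm_restrict {S : Set V} {v : V} (h : T.adm v S) {c : V} (hc : T.isChild c v) :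
    T.adm c (S ∩ {u | T.desc u c}) := by
  constructor
  · intro u hu
    exact ⟨hu.2, (h.1 u hu.1).2⟩
  · intro w hw c' hc'
    have := h.2 w hw.1 c' hc'
    rwa [avoid_congr (S' := S ∩ {u | T.desc u c}) ?_] at this
    intro u hu
    have hdw : T.desc u w := desc_child hc' hu
    have hdc : T.desc u c := desc_trans hdw hw.2
    simp only [Set.mem_inter_iff, Set.mem_setOf_eq, iff_self_and]
    exact fun _ => hdc

lemma avoid_restrict {S : Set V} {c : V} :
    T.avoid S c ↔ T.avoid (S ∩ {u | T.desc u c}) c := by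
  apply avoid_congr
  intro u hu
  simp only [Set.mem_inter_iff, Set.mem_setOf_eq, iff_self_and]
  exact fun _ => hu

end RBT
namespace RBT

variable {V : Type} [Fintype V] [DecidableEq V] {T : RBT V}

section Split2

variable {v c1 c2 : V} (hvint : T.isInternal v) (hc1 : T.isChild c1 v) (hc2 : T.isChild c2 v)
  (hne : c1 ≠ c2) (hcl : ∀ c, T.isChild c v → c = c1 ∨ c = c2)

include hvint hc1 hc2 hne hcl

set_option linter.unusedSectionVars false

lemma not_desc_v_c1 : ¬ T.desc v c1 := fun h => ne_of_desc_child hc1 h rfl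

lemma adm_union {S1 S2 : Set V} (h1 : T.adm c1 S1) (h2 : T.adm c2 S2) :
    T.adm v (S1 ∪ S2) := by
  have hs1 : ∀ u ∈ S1, T.desc u c1 := fun u hu => (h1.1 u hu).1
  have hs2 : ∀ u ∈ S2, T.desc u c2 := fun u hu => (h2.1 u hu).1
  constructor
  · rintro u (hu | hu)
    · exact ⟨desc_child hc1 (hs1 u hu), (h1.1 u hu).2⟩
    · exact ⟨desc_child hc2 (hs2 u hu), (h2.1 u hu).2⟩
  · rintro w (hw | hw) c' hc'
    · have := h1.2 w hw c' hc'
      rwa [avoid_congr (S' := S1 ∪ S2) ?_] at this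
      intro u hu
      have hd1 : T.desc u c1 := desc_trans (desc_child hc' hu) (hs1 w hw)
      have : u ∉ S2 := fun h => child_subtree_disjoint hne hc1 hc2 hd1 (hs2 u h)
      simp only [Set.mem_union, or_iff_left_iff_imp]
      tauto
    · have := h2.2 w hw c' hc'
      rwa [avoid_congr (S' := S1 ∪ S2) ?_] at this
      intro u hu
      have hd2 : T.desc u c2 := desc_trans (desc_child hc' hu) (hs2 w hw)
      have : u ∉ S1 := fun h => child_subtree_disjoint hne hc1 hc2 (hs1 u h) hd2
      simp only [Set.mem_union]
      tauto

lemma restrict_insert {S1 S2 : Set V} (hs1 : ∀ u ∈ S1, T.desc u c1)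
    (hs2 : ∀ u ∈ S2, T.desc u c2) :
    insert v (S1 ∪ S2) ∩ {u | T.desc u c1} = S1 ∧
    insert v (S1 ∪ S2) ∩ {u | T.desc u c2} = S2 ∧
    (S1 ∪ S2) ∩ {u | T.desc u c1} = S1 ∧
    (S1 ∪ S2) ∩ {u | T.desc u c2} = S2 := by
  have k1 : (S1 ∪ S2) ∩ {u | T.desc u c1} = S1 := by
    ext u
    simp only [Set.mem_inter_iff, Set.mem_union, Set.mem_setOf_eq]
    constructor
    · rintro ⟨hu | hu, hd⟩
      · exact hu
      · exact absurd hd (fun h => child_subtree_disjoint hne hc1 hc2 h (hs2 u hu))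
    · intro hu; exact ⟨Or.inl hu, hs1 u hu⟩
  have k2 : (S1 ∪ S2) ∩ {u | T.desc u c2} = S2 := by
    ext u
    simp only [Set.mem_inter_iff, Set.mem_union, Set.mem_setOf_eq]
    constructor
    · rintro ⟨hu | hu, hd⟩
      · exact absurd hd (fun h => child_subtree_disjoint hne hc1 hc2 (hs1 u hu) h)
      · exact hu
    · intro hu; exact ⟨Or.inr hu, hs2 u hu⟩
  have hv1 : ¬ T.desc v c1 := fun h => ne_of_desc_child hc1 h rfl
  have hv2 : ¬ T.desc v c2 := fun h => ne_of_desc_child hc2 h rfl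
  have k3 : insert v (S1 ∪ S2) ∩ {u | T.desc u c1} = S1 := by
    ext u
    constructor
    · rintro ⟨hu, hd⟩
      rcases hu with rfl | hu
      · exact absurd hd hv1
      · exact k1 ▸ (⟨hu, hd⟩ : u ∈ (S1 ∪ S2) ∩ {u | T.desc u c1})
    · intro hu
      exact ⟨Or.inr (Or.inl hu), hs1 u hu⟩
  have k4 : insert v (S1 ∪ S2) ∩ {u | T.desc u c2} = S2 := by
    ext u
    constructor
    · rintro ⟨hu, hd⟩
      rcases hu with rfl | hu
      · exact absurd hd hv2
      · exact k2 ▸ (⟨hu, hd⟩ : u ∈ (S1 ∪ S2) ∩ {u | T.desc u c2})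
    · intro hu
      exact ⟨Or.inr (Or.inr hu), hs2 u hu⟩
  exact ⟨k3, k4, k1, k2⟩

lemma adm_insert {S1 S2 : Set V} (h1 : T.fre c1 S1) (h2 : T.fre c2 S2) :
    T.adm v (insert v (S1 ∪ S2)) := by
  have hs1 : ∀ u ∈ S1, T.desc u c1 := fun u hu => (h1.1.1 u hu).1
  have hs2 : ∀ u ∈ S2, T.desc u c2 := fun u hu => (h2.1.1 u hu).1
  obtain ⟨k3, k4, -, -⟩ := restrict_insert hvint hc1 hc2 hne hcl hs1 hs2
  have hadm : T.adm v (S1 ∪ S2) := adm_union hvint hc1 hc2 hne hcl h1.1 h2.1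
  constructor
  · rintro u (rfl | hu)
    · exact ⟨desc_refl u, hvint⟩
    · exact hadm.1 u hu
  · rintro w (rfl | hw) c' hc'
    · rcases hcl c' hc' with rfl | rfl
      · rw [avoid_congr (S := insert w (S1 ∪ S2)) (S' := S1) ?_]
        · exact h1.2
        · intro u hu
          have := Set.ext_iff.1 k3 u
          simp only [Set.mem_inter_iff, Set.mem_setOf_eq] at this
          rw [← this]; simp [hu]
      · rw [avoid_congr (S := insert w (S1 ∪ S2)) (S' := S2) ?_]
        · exact h2.2
        · intro u hu
          have := Set.ext_iff.1 k4 u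
          simp only [Set.mem_inter_iff, Set.mem_setOf_eq] at this
          rw [← this]; simp [hu]
    · have := hadm.2 w hw c' hc'
      rwa [avoid_congr (S := S1 ∪ S2) (S' := insert v (S1 ∪ S2)) ?_] at this
      intro u hu
      have hdw : T.desc u w := desc_child hc' hu
      have hwv : T.desc w v := (hadm.1 w hw).1
      have huv : u ≠ v := by
        rcases hw with hw | hw
        · exact ne_of_desc_child hc1 (desc_trans hdw (hs1 w hw)) 
        · exact ne_of_desc_child hc2 (desc_trans hdw (hs2 w hw))
      simp [Set.mem_insert_iff, huv]

lemma adm_split {S : Set V} (h : T.adm v S) :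
    (v ∈ S → T.fre c1 (S ∩ {u | T.desc u c1}) ∧ T.fre c2 (S ∩ {u | T.desc u c2})) ∧
    (v ∉ S → T.adm c1 (S ∩ {u | T.desc u c1}) ∧ T.adm c2 (S ∩ {u | T.desc u c2})) ∧
    (v ∈ S → S = insert v ((S ∩ {u | T.desc u c1}) ∪ (S ∩ {u | T.desc u c2}))) ∧
    (v ∉ S → S = (S ∩ {u | T.desc u c1}) ∪ (S ∩ {u | T.desc u c2})) := by
  have hsub : ∀ u ∈ S, u ≠ v → T.desc u c1 ∨ T.desc u c2 := by
    intro u hu huv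
    exact desc_cases hc1 hc2 hcl (h.1 u hu).1 huv
  refine ⟨?_, ?_, ?_, ?_⟩
  · intro hv
    refine ⟨⟨adm_restrict h hc1, ?_⟩, ⟨adm_restrict h hc2, ?_⟩⟩
    · rw [← avoid_restrict]; exact h.2 v hv c1 hc1
    · rw [← avoid_restrict]; exact h.2 v hv c2 hc2
  · intro _; exact ⟨adm_restrict h hc1, adm_restrict h hc2⟩
  · intro hv
    ext u
    simp only [Set.mem_insert_iff, Set.mem_union, Set.mem_inter_iff, Set.mem_setOf_eq]
    constructor
    · intro hu
      by_cases huv : u = v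
      · exact Or.inl huv
      · rcases hsub u hu huv with h' | h'
        · exact Or.inr (Or.inl ⟨hu, h'⟩)
        · exact Or.inr (Or.inr ⟨hu, h'⟩)
    · rintro (rfl | ⟨hu, -⟩ | ⟨hu, -⟩) <;> first | exact hv | exact hu
  · intro hv
    ext u
    simp only [Set.mem_union, Set.mem_inter_iff, Set.mem_setOf_eq]
    constructor
    · intro hu
      have huv : u ≠ v := fun h' => hv (h' ▸ hu)
      rcases hsub u hu huv with h' | h'
      · exact Or.inl ⟨hu, h'⟩
      · exact Or.inr ⟨hu, h'⟩
    · rintro (⟨hu, -⟩ | ⟨hu, -⟩) <;> exact hu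

end Split2

end RBT
namespace RBT

variable {V : Type} [Fintype V] [DecidableEq V] {T : RBT V}

set_option linter.unusedSectionVars false

lemma count_eq : ∀ v : V,
    Nat.card {S : Set V // T.adm v S} = Nat.fib (T.nl v + 1) ∧
    Nat.card {S : Set V // T.fre v S} = Nat.fib (T.nl v) ∧ 1 ≤ T.nl v := by
  classical
  apply child_induction
  intro v ih
  by_cases hl : T.isLeaf v
  · have hnl : T.nl v = 1 := by
      rw [nl, Nat.card_eq_one_iff_exists]
      refine ⟨⟨v, hl, desc_refl v⟩, ?_⟩
      rintro ⟨u, hu1, hu2⟩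
      exact Subtype.ext (leaf_desc_eq hl hu2)
    have hA : Nat.card {S : Set V // T.adm v S} = 1 := by
      rw [Nat.card_eq_one_iff_exists]
      refine ⟨⟨∅, (adm_leaf hl).2 rfl⟩, ?_⟩
      rintro ⟨S, hS⟩
      exact Subtype.ext ((adm_leaf hl).1 hS)
    have hB : Nat.card {S : Set V // T.fre v S} = 1 := by
      rw [Nat.card_eq_one_iff_exists]
      refine ⟨⟨∅, (fre_leaf hl).2 rfl⟩, ?_⟩
      rintro ⟨S, hS⟩
      exact Subtype.ext ((fre_leaf hl).1 hS)
    rw [hnl, hA, hB]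
    norm_num [Nat.fib_one, Nat.fib_two]
  · replace hl : T.isInternal v := hl
    obtain ⟨c1, c2, hne, hc1, hc2, hcl⟩ := internal_children hl
    obtain ⟨A1, B1, n1pos⟩ := ih c1 hc1
    obtain ⟨A2, B2, n2pos⟩ := ih c2 hc2
    -- leaf count splits
    have hnl : T.nl v = T.nl c1 + T.nl c2 := by
      rw [nl, nl, nl, ← Nat.card_sum]
      apply Nat.card_congr
      refine ⟨fun x => if h : T.desc x.1 c1 then Sum.inl ⟨x.1, x.2.1, h⟩ else
        Sum.inr ⟨x.1, x.2.1, ?_⟩, fun y => Sum.elim (fun x => ⟨x.1, x.2.1, desc_child hc1 x.2.2⟩)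
          (fun x => ⟨x.1, x.2.1, desc_child hc2 x.2.2⟩) y, ?_, ?_⟩
      · have hxv : x.1 ≠ v := fun he => hl (he ▸ x.2.1)
        rcases desc_cases hc1 hc2 hcl x.2.2 hxv with h' | h'
        · exact absurd h' h
        · exact h'
      · rintro ⟨u, hu1, hu2⟩
        by_cases h : T.desc u c1 <;> simp [h]
      · rintro (⟨u, hu1, hu2⟩ | ⟨u, hu1, hu2⟩)
        · simp [hu2]
        · have : ¬ T.desc u c1 := fun h => child_subtree_disjoint hne hc1 hc2 h hu2
          simp [this]
    -- the A-equivalence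
    have eA : Nat.card {S : Set V // T.adm v S} =
        Nat.card {S : Set V // T.fre c1 S} * Nat.card {S : Set V // T.fre c2 S} +
        Nat.card {S : Set V // T.adm c1 S} * Nat.card {S : Set V // T.adm c2 S} := by
      rw [← Nat.card_prod, ← Nat.card_prod, ← Nat.card_sum]
      apply Nat.card_congr
      refine ⟨fun x => if h : v ∈ x.1 then
          Sum.inl (⟨x.1 ∩ {u | T.desc u c1}, (((adm_split hl hc1 hc2 hne hcl x.2).1) h).1⟩,
                   ⟨x.1 ∩ {u | T.desc u c2}, (((adm_split hl hc1 hc2 hne hcl x.2).1) h).2⟩)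
        else
          Sum.inr (⟨x.1 ∩ {u | T.desc u c1}, (((adm_split hl hc1 hc2 hne hcl x.2).2.1) h).1⟩,
                   ⟨x.1 ∩ {u | T.desc u c2}, (((adm_split hl hc1 hc2 hne hcl x.2).2.1) h).2⟩),
        fun y => Sum.elim
          (fun p => ⟨insert v (p.1.1 ∪ p.2.1), adm_insert hl hc1 hc2 hne hcl p.1.2 p.2.2⟩)
          (fun p => ⟨p.1.1 ∪ p.2.1, adm_union hl hc1 hc2 hne hcl p.1.2 p.2.2⟩) y, ?_, ?_⟩
      · rintro ⟨S, hS⟩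
        by_cases h : v ∈ S
        · simp only [h, dif_pos, Sum.elim_inl]
          exact Subtype.ext (((adm_split hl hc1 hc2 hne hcl hS).2.2.1) h).symm
        · simp only [h, dif_neg, not_false_iff, Sum.elim_inr]
          exact Subtype.ext (((adm_split hl hc1 hc2 hne hcl hS).2.2.2) h).symm
      · rintro (⟨⟨S1, h1⟩, ⟨S2, h2⟩⟩ | ⟨⟨S1, h1⟩, ⟨S2, h2⟩⟩)
        · obtain ⟨k3, k4, -, -⟩ := restrict_insert hl hc1 hc2 hne hcl
            (fun u hu => (h1.1.1 u hu).1) (fun u hu => (h2.1.1 u hu).1)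
          have hv : v ∈ insert v (S1 ∪ S2) := Set.mem_insert _ _
          simp only [hv, reduceDIte, Sum.elim_inl]
          exact congrArg Sum.inl (Prod.ext (Subtype.ext k3) (Subtype.ext k4))
        · obtain ⟨-, -, k1, k2⟩ := restrict_insert hl hc1 hc2 hne hcl
            (fun u hu => (h1.1 u hu).1) (fun u hu => (h2.1 u hu).1)
          have hv : v ∉ S1 ∪ S2 := by
            rintro (h | h)
            · exact ne_of_desc_child hc1 ((h1.1 v h).1) rfl
            · exact ne_of_desc_child hc2 ((h2.1 v h).1) rfl
          simp only [hv, reduceDIte, not_false_iff, Sum.elim_inr]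
          exact congrArg Sum.inr (Prod.ext (Subtype.ext k1) (Subtype.ext k2))

    -- splitting adm c1 by avoid
    have eC : Nat.card {S : Set V // T.adm c1 S} =
        Nat.card {S : Set V // T.fre c1 S} +
        Nat.card {S : Set V // T.adm c1 S ∧ ¬ T.avoid S c1} := by
      rw [← Nat.card_sum]
      apply Nat.card_congr
      refine ⟨fun x => if h : T.avoid x.1 c1 then Sum.inl ⟨x.1, x.2, h⟩ else
          Sum.inr ⟨x.1, x.2, h⟩,
        fun y => Sum.elim (fun p => ⟨p.1, p.2.1⟩) (fun p => ⟨p.1, p.2.1⟩) y, ?_, ?_⟩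
      · rintro ⟨S, hS⟩
        by_cases h : T.avoid S c1
        · simp only [dif_pos h, Sum.elim_inl]
        · simp only [dif_neg h, Sum.elim_inr]
      · rintro (⟨S, hS⟩ | ⟨S, hS⟩)
        · simp only [Sum.elim_inl, hS.2, reduceDIte]
        · simp only [Sum.elim_inr, hS.2, reduceDIte]
    -- the B-equivalence
    have hvnotin : ∀ (S1 S2 : Set V), T.adm c1 S1 → T.adm c2 S2 → v ∉ S1 ∪ S2 := by
      rintro S1 S2 h1 h2 (h | h)
      · exact ne_of_desc_child hc1 ((h1.1 v h).1) rfl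
      · exact ne_of_desc_child hc2 ((h2.1 v h).1) rfl
    have havu1 : ∀ (S1 S2 : Set V), T.adm c1 S1 → T.adm c2 S2 →
        (T.avoid (S1 ∪ S2) c1 ↔ T.avoid S1 c1) := by
      intro S1 S2 h1 h2
      obtain ⟨-, -, k1, -⟩ := restrict_insert hl hc1 hc2 hne hcl
        (fun u hu => (h1.1 u hu).1) (fun u hu => (h2.1 u hu).1)
      rw [avoid_restrict (c := c1), k1]
    have havu2 : ∀ (S1 S2 : Set V), T.adm c1 S1 → T.adm c2 S2 →
        (T.avoid (S1 ∪ S2) c2 ↔ T.avoid S2 c2) := by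
      intro S1 S2 h1 h2
      obtain ⟨-, -, -, k2⟩ := restrict_insert hl hc1 hc2 hne hcl
        (fun u hu => (h1.1 u hu).1) (fun u hu => (h2.1 u hu).1)
      rw [avoid_restrict (c := c2), k2]
    have hfre_iff : ∀ S : Set V, T.fre v S ↔
        T.adm v S ∧ v ∉ S ∧ (T.avoid S c1 ∨ T.avoid S c2) := by
      intro S
      rw [fre, avoid_internal hl hc1 hc2 hne hcl]
    have eB : Nat.card {S : Set V // T.fre v S} =
        Nat.card {S : Set V // T.fre c1 S} * Nat.card {S : Set V // T.adm c2 S} +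
        Nat.card {S : Set V // T.adm c1 S ∧ ¬ T.avoid S c1} *
          Nat.card {S : Set V // T.fre c2 S} := by
      rw [← Nat.card_prod, ← Nat.card_prod, ← Nat.card_sum]
      apply Nat.card_congr
      refine ⟨fun x => if h : T.avoid x.1 c1 then
          Sum.inl (⟨x.1 ∩ {u | T.desc u c1},
              ((adm_split hl hc1 hc2 hne hcl ((hfre_iff x.1).1 x.2).1).2.1
                ((hfre_iff x.1).1 x.2).2.1).1, (avoid_restrict (c := c1)).1 h⟩,
            ⟨x.1 ∩ {u | T.desc u c2},
              ((adm_split hl hc1 hc2 hne hcl ((hfre_iff x.1).1 x.2).1).2.1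
                ((hfre_iff x.1).1 x.2).2.1).2⟩)
        else
          Sum.inr (⟨x.1 ∩ {u | T.desc u c1},
              ((adm_split hl hc1 hc2 hne hcl ((hfre_iff x.1).1 x.2).1).2.1
                ((hfre_iff x.1).1 x.2).2.1).1,
              fun hh => h ((avoid_restrict (c := c1)).2 hh)⟩,
            ⟨x.1 ∩ {u | T.desc u c2},
              ((adm_split hl hc1 hc2 hne hcl ((hfre_iff x.1).1 x.2).1).2.1
                ((hfre_iff x.1).1 x.2).2.1).2,
              (avoid_restrict (c := c2)).1 (((hfre_iff x.1).1 x.2).2.2.resolve_left h)⟩),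
        fun y => ?_, ?_, ?_⟩
      · refine Sum.elim (fun p => ⟨p.1.1 ∪ p.2.1, ?_⟩) (fun p => ⟨p.1.1 ∪ p.2.1, ?_⟩) y
        · refine (hfre_iff _).2 ⟨adm_union hl hc1 hc2 hne hcl p.1.2.1 p.2.2,
            hvnotin _ _ p.1.2.1 p.2.2, Or.inl ?_⟩
          exact (havu1 _ _ p.1.2.1 p.2.2).2 p.1.2.2
        · refine (hfre_iff _).2 ⟨adm_union hl hc1 hc2 hne hcl p.1.2.1 p.2.2.1,
            hvnotin _ _ p.1.2.1 p.2.2.1, Or.inr ?_⟩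
          exact (havu2 _ _ p.1.2.1 p.2.2.1).2 p.2.2.2
      · rintro ⟨S, hS⟩
        have h' := (hfre_iff S).1 hS
        have heq := (adm_split hl hc1 hc2 hne hcl h'.1).2.2.2 h'.2.1
        by_cases h : T.avoid S c1
        · simp only [dif_pos h, Sum.elim_inl]
          exact Subtype.ext heq.symm
        · simp only [dif_neg h, Sum.elim_inr]
          exact Subtype.ext heq.symm
      · rintro (⟨⟨S1, h1⟩, ⟨S2, h2⟩⟩ | ⟨⟨S1, h1⟩, ⟨S2, h2⟩⟩)
        · simp only [Sum.elim_inl]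
          obtain ⟨-, -, k1, k2⟩ := restrict_insert hl hc1 hc2 hne hcl
            (fun u hu => (h1.1.1 u hu).1) (fun u hu => (h2.1 u hu).1)
          have hcond : T.avoid (S1 ∪ S2) c1 := (havu1 _ _ h1.1 h2).2 h1.2
          simp only [hcond, reduceDIte]
          exact congrArg Sum.inl (Prod.ext (Subtype.ext k1) (Subtype.ext k2))
        · simp only [Sum.elim_inr]
          obtain ⟨-, -, k1, k2⟩ := restrict_insert hl hc1 hc2 hne hcl
            (fun u hu => (h1.1.1 u hu).1) (fun u hu => (h2.1.1 u hu).1)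
          have hcond : ¬ T.avoid (S1 ∪ S2) c1 := fun hh =>
            h1.2 ((havu1 _ _ h1.1 h2.1).1 hh)
          simp only [hcond, reduceDIte]
          exact congrArg Sum.inr (Prod.ext (Subtype.ext k1) (Subtype.ext k2))
    -- arithmetic
    obtain ⟨m, hm⟩ : ∃ m, T.nl c1 = m + 1 := ⟨T.nl c1 - 1, by omega⟩
    have hC1 : Nat.card {S : Set V // T.adm c1 S ∧ ¬ T.avoid S c1} = Nat.fib m := by
      rw [A1, B1, hm, show m + 1 + 1 = m + 2 by omega] at eC
      have := Nat.fib_add_two (n := m)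
      omega
    refine ⟨?_, ?_, by omega⟩
    · rw [eA, A1, A2, B1, B2, hnl]
      rw [Nat.fib_add]
    · rw [eB, B1, A2, hC1, B2, hnl, hm]
      rw [show m + 1 + T.nl c2 = m + T.nl c2 + 1 by ring, Nat.fib_add]
      ring

end RBT
namespace RBT

variable {V : Type} [Fintype V] [DecidableEq V] {T : RBT V}

set_option linter.unusedSectionVars false

lemma pathEdges_mk (l1 l2 : V) :
    T.pathEdges (s(l1, l2)) = symmDiff (T.upEdges l1) (T.upEdges l2) := by
  simp [pathEdges]

lemma mem_upEdges {l u : V} : u ∈ T.upEdges l ↔ u ≠ T.root ∧ T.desc l u := Iff.rfl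

lemma mem_pathEdges_of {l1 l2 d : V} (h1 : T.desc l1 d) (h2 : ¬ T.desc l2 d)
    (h3 : d ≠ T.root) : d ∈ T.pathEdges (s(l1, l2)) := by
  rw [pathEdges_mk, Set.mem_symmDiff]
  exact Or.inl ⟨⟨h3, h1⟩, fun h => h2 h.2⟩

lemma mem_pathEdges_of' {l1 l2 d : V} (h1 : T.desc l2 d) (h2 : ¬ T.desc l1 d)
    (h3 : d ≠ T.root) : d ∈ T.pathEdges (s(l1, l2)) := by
  rw [pathEdges_mk, Set.mem_symmDiff]
  exact Or.inr ⟨⟨h3, h1⟩, fun h => h2 h.2⟩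

lemma isTopOf_mk {v l1 l2 : V} : T.isTopOf v (s(l1, l2)) ↔ T.isLCA l1 l2 v := by
  simp [isTopOf]

lemma top_unique {x y : V} {p : Sym2 V} (h1 : T.isTopOf x p) (h2 : T.isTopOf y p) : x = y := by
  obtain ⟨⟨l1, l2⟩, rfl⟩ := Quot.exists_rep p
  rw [isTopOf_mk] at h1 h2
  exact desc_antisymm (h1.2.2 y h2.1 h2.2.1) (h2.2.2 x h1.1 h1.2.1)

lemma isLCA_internal {x l1 l2 : V} (h : T.isLCA l1 l2 x) (hl1 : T.isLeaf l1)
    (hl2 : T.isLeaf l2) (h12 : l1 ≠ l2) : T.isInternal x := by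
  intro hx
  exact h12 ((leaf_desc_eq hx h.1).trans (leaf_desc_eq hx h.2.1).symm)

lemma not_both_desc_of_lca {x l1 l2 c : V} (h : T.isLCA l1 l2 x) (hc : T.isChild c x)
    (hd1 : T.desc l1 c) (hd2 : T.desc l2 c) : False :=
  hc.2 (desc_antisymm ⟨1, hc.1⟩ (h.2.2 c hd1 hd2))

lemma top_split {x l1 l2 c1 c2 : V} (h : T.isLCA l1 l2 x) (hl1 : T.isLeaf l1)
    (hl2 : T.isLeaf l2) (h12 : l1 ≠ l2)
    (hc1 : T.isChild c1 x) (hc2 : T.isChild c2 x)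
    (hcl : ∀ c, T.isChild c x → c = c1 ∨ c = c2) :
    (T.desc l1 c1 ∧ T.desc l2 c2) ∨ (T.desc l1 c2 ∧ T.desc l2 c1) := by
  have hint := isLCA_internal h hl1 hl2 h12
  have hn1 : l1 ≠ x := fun he => hint (he ▸ hl1)
  have hn2 : l2 ≠ x := fun he => hint (he ▸ hl2)
  rcases desc_cases hc1 hc2 hcl h.1 hn1 with ha | ha <;>
    rcases desc_cases hc1 hc2 hcl h.2.1 hn2 with hb | hb
  · exact absurd (not_both_desc_of_lca h hc1 ha hb) (fun h => h)
  · exact Or.inl ⟨ha, hb⟩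
  · exact Or.inr ⟨ha, hb⟩
  · exact absurd (not_both_desc_of_lca h hc2 ha hb) (fun h => h)

lemma child_mem_pathEdges {u m1 m2 d : V} (hlca : T.isLCA m1 m2 u) (hl1 : T.isLeaf m1)
    (hl2 : T.isLeaf m2) (h12 : m1 ≠ m2) (hd : T.isChild d u) :
    d ∈ T.pathEdges (s(m1, m2)) := by
  have hint := isLCA_internal hlca hl1 hl2 h12
  obtain ⟨d1, d2, hne, hd1, hd2, hcl⟩ := internal_children hint
  have hsp := top_split hlca hl1 hl2 h12 hd1 hd2 hcl
  have hroot := child_ne_root hd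
  rcases hcl d hd with rfl | rfl
  · rcases hsp with ⟨ha, hb⟩ | ⟨ha, hb⟩
    · exact mem_pathEdges_of ha
        (fun h => child_subtree_disjoint hne hd1 hd2 h hb) hroot
    · exact mem_pathEdges_of' hb
        (fun h => child_subtree_disjoint hne hd1 hd2 h ha) hroot
  · rcases hsp with ⟨ha, hb⟩ | ⟨ha, hb⟩
    · exact mem_pathEdges_of' hb
        (fun h => child_subtree_disjoint hne.symm hd2 hd1 h ha) hroot
    · exact mem_pathEdges_of ha
        (fun h => child_subtree_disjoint hne.symm hd2 hd1 h hb) hroot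

lemma pair_rep {P : PathSystem T} {p : Sym2 V} (hp : p ∈ P.pairs) :
    ∃ l1 l2, p = s(l1, l2) ∧ T.isLeaf l1 ∧ T.isLeaf l2 ∧ l1 ≠ l2 := by
  obtain ⟨⟨l1, l2⟩, rfl⟩ := Quot.exists_rep p
  refine ⟨l1, l2, rfl, ?_, ?_, ?_⟩
  · exact P.leaf_mem _ hp l1 (Sym2.mem_mk_left _ _)
  · exact P.leaf_mem _ hp l2 (Sym2.mem_mk_right _ _)
  · intro h
    exact P.not_diag _ hp (by rw [Sym2.mk_isDiag_iff]; exact h)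

lemma topSet_adm (P : PathSystem T) : T.adm T.root P.topSet := by
  constructor
  · rintro x ⟨p, hp, htop⟩
    obtain ⟨l1, l2, rfl, hl1, hl2, h12⟩ := pair_rep hp
    rw [isTopOf_mk] at htop
    exact ⟨desc_root x, isLCA_internal htop hl1 hl2 h12⟩
  · rintro x ⟨p, hp, htop⟩ c hc
    obtain ⟨l1, l2, rfl, hl1, hl2, h12⟩ := pair_rep hp
    rw [isTopOf_mk] at htop
    have hint := isLCA_internal htop hl1 hl2 h12
    obtain ⟨c1, c2, hne, hc1, hc2, hcl⟩ := internal_children hint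
    have hsp := top_split htop hl1 hl2 h12 hc1 hc2 hcl
    -- pick the leaf of p below c
    have hkey : ∀ li lo : V, T.isLeaf li → T.desc li c → ¬ T.desc lo c →
        T.isLCA li lo x ∨ T.isLCA lo li x →
        (∀ d : V, T.desc li d → ¬ T.desc lo d → d ≠ T.root →
          d ∈ T.pathEdges (s(l1, l2))) →
        T.avoid P.topSet c := by
      intro li lo hlfi hdi hdo hlcaor hmem
      refine ⟨li, hlfi, hdi, ?_⟩
      rintro u hu1 hu2 ⟨q, hq, htopq⟩
      obtain ⟨m1, m2, rfl, hm1, hm2, hm12⟩ := pair_rep hq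
      rw [isTopOf_mk] at htopq
      have hux : u ≠ x := ne_of_desc_child hc hu2
      have hqp : s(m1, m2) ≠ s(l1, l2) := by
        intro he
        apply hux
        apply top_unique (p := s(l1, l2)) _ (isTopOf_mk.2 htop)
        rw [← he]
        exact isTopOf_mk.2 htopq
      have huint := isLCA_internal htopq hm1 hm2 hm12
      have hliu : li ≠ u := fun he => huint (he ▸ hlfi)
      obtain ⟨d, hd, hdli⟩ := exists_child_desc hu1 hliu
      have hdu : T.desc d u := ⟨1, hd.1⟩
      have hdx : T.desc d x := desc_trans hdu (desc_child hc hu2)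
      have hdq : d ∈ T.pathEdges (s(m1, m2)) :=
        child_mem_pathEdges htopq hm1 hm2 hm12 hd
      have hdp : d ∈ T.pathEdges (s(l1, l2)) := by
        apply hmem d hdli ?_ (child_ne_root hd)
        intro hlo
        have hxd : T.desc x d := by
          rcases hlcaor with hl | hl
          · exact hl.2.2 d hdli hlo
          · exact hl.2.2 d hlo hdli
        have : x = d := desc_antisymm hxd hdx
        subst this
        exact hd.2 (desc_antisymm hdu (desc_trans (desc_child hc hu2) (desc_refl x)))
      exact Set.disjoint_left.mp (P.edge_disjoint hq hp hqp) hdq hdp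
    rcases hcl c hc with rfl | rfl
    · rcases hsp with ⟨ha, hb⟩ | ⟨ha, hb⟩
      · exact hkey l1 l2 hl1 ha
          (fun h => child_subtree_disjoint hne hc1 hc2 h hb) (Or.inl htop)
          (fun d h1 h2 h3 => mem_pathEdges_of h1 h2 h3)
      · exact hkey l2 l1 hl2 hb
          (fun h => child_subtree_disjoint hne hc1 hc2 h ha) (Or.inr htop)
          (fun d h1 h2 h3 => mem_pathEdges_of' h1 h2 h3)
    · rcases hsp with ⟨ha, hb⟩ | ⟨ha, hb⟩
      · exact hkey l2 l1 hl2 hb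
          (fun h => child_subtree_disjoint hne.symm hc2 hc1 h ha) (Or.inr htop)
          (fun d h1 h2 h3 => mem_pathEdges_of' h1 h2 h3)
      · exact hkey l1 l2 hl1 ha
          (fun h => child_subtree_disjoint hne.symm hc2 hc1 h hb) (Or.inl htop)
          (fun d h1 h2 h3 => mem_pathEdges_of h1 h2 h3)

end RBT
namespace RBT

variable {V : Type} [Fintype V] [DecidableEq V] {T : RBT V}

set_option linter.unusedSectionVars false

lemma exists_pathSystem {S : Set V} (h : T.adm T.root S) :
    ∃ P : PathSystem T, P.topSet = S := by
  classical
  have hchild : ∀ v, v ∈ S → ∃ l1 l2 : V, (T.isLeaf l1 ∧ T.isLeaf l2 ∧ l1 ≠ l2) ∧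
      T.isLCA l1 l2 v ∧
      (∀ u, T.desc l1 u → T.desc u v → u ≠ v → u ∉ S) ∧
      (∀ u, T.desc l2 u → T.desc u v → u ≠ v → u ∉ S) := by
    intro v hv
    obtain ⟨c1, c2, hne, hc1, hc2, hcl⟩ := internal_children (h.1 v hv).2
    obtain ⟨l1, hl1, hd1, hav1⟩ := h.2 v hv c1 hc1
    obtain ⟨l2, hl2, hd2, hav2⟩ := h.2 v hv c2 hc2
    have h12 : l1 ≠ l2 := by
      rintro rfl
      exact child_subtree_disjoint hne hc1 hc2 hd1 hd2
    have hlv1 : T.desc l1 v := desc_child hc1 hd1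
    have hlv2 : T.desc l2 v := desc_child hc2 hd2
    refine ⟨l1, l2, ⟨hl1, hl2, h12⟩, ⟨hlv1, hlv2, ?_⟩, ?_, ?_⟩
    · intro w hw1 hw2
      rcases desc_comparable hw1 hlv1 with hvw | hvw
      · by_cases hwv : w = v
        · subst hwv; exact desc_refl w
        · exfalso
          exact child_subtree_disjoint hne hc1 hc2
            (desc_child_of_between hc1 hd1 hw1 hvw hwv)
            (desc_child_of_between hc2 hd2 hw2 hvw hwv)
      · exact hvw
    · intro u hu1 hu2 hu3
      exact hav1 u hu1 (desc_child_of_between hc1 hd1 hu1 hu2 hu3)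
    · intro u hu1 hu2 hu3
      exact hav2 u hu1 (desc_child_of_between hc2 hd2 hu1 hu2 hu3)
  choose f1 f2 hfl hflca hr1 hr2 using hchild
  set F : V → Sym2 V := fun v =>
    if hv : v ∈ S then s(f1 v hv, f2 v hv) else s(v, v) with hF
  have hFv : ∀ v (hv : v ∈ S), F v = s(f1 v hv, f2 v hv) := by
    intro v hv; rw [hF]; exact dif_pos hv
  have hedge : ∀ v (hv : v ∈ S) u, u ∈ T.pathEdges (F v) →
      (T.desc u v ∧ u ≠ v) ∧ (T.desc (f1 v hv) u ∨ T.desc (f2 v hv) u) := by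
    intro v hv u hu
    rw [hFv v hv, pathEdges_mk, Set.mem_symmDiff] at hu
    rcases hu with ⟨⟨hroot, hd⟩, hnot⟩ | ⟨⟨hroot, hd⟩, hnot⟩
    · have huv : u ≠ v := by
        rintro rfl
        exact hnot ⟨hroot, (hflca _ hv).2.1⟩
      have hduv : T.desc u v := by
        rcases desc_comparable hd (hflca v hv).1 with h' | h'
        · exact h'
        · exact absurd ⟨hroot, desc_trans (hflca v hv).2.1 h'⟩ hnot
      exact ⟨⟨hduv, huv⟩, Or.inl hd⟩
    · have huv : u ≠ v := by
        rintro rfl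
        exact hnot ⟨hroot, (hflca _ hv).1⟩
      have hduv : T.desc u v := by
        rcases desc_comparable hd (hflca v hv).2.1 with h' | h'
        · exact h'
        · exact absurd ⟨hroot, desc_trans (hflca v hv).1 h'⟩ hnot
      exact ⟨⟨hduv, huv⟩, Or.inr hd⟩
  have hdisj : ∀ v w (hv : v ∈ S) (hw : w ∈ S), v ≠ w →
      Disjoint (T.pathEdges (F v)) (T.pathEdges (F w)) := by
    intro v w hv hw hvw
    rw [Set.disjoint_left]
    intro u huv huw
    obtain ⟨⟨hduv, hunev⟩, hor1⟩ := hedge v hv u huv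
    obtain ⟨⟨hduw, hunew⟩, hor2⟩ := hedge w hw u huw
    rcases desc_comparable hduv hduw with hcase | hcase
    · rcases hor2 with h' | h'
      · exact hr1 w hw v (desc_trans h' hduv) hcase hvw hv
      · exact hr2 w hw v (desc_trans h' hduv) hcase hvw hv
    · rcases hor1 with h' | h'
      · exact hr1 v hv w (desc_trans h' hduw) hcase (Ne.symm hvw) hw
      · exact hr2 v hv w (desc_trans h' hduw) hcase (Ne.symm hvw) hw
  have hSfin : S.Finite := Set.toFinite S
  refine ⟨⟨hSfin.toFinset.image F, ?_, ?_, ?_⟩, ?_⟩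
  · intro p hp l hl
    rw [Finset.mem_image] at hp
    obtain ⟨v, hvmem, rfl⟩ := hp
    rw [Set.Finite.mem_toFinset] at hvmem
    rw [hFv v hvmem] at hl
    rw [Sym2.mem_iff] at hl
    rcases hl with rfl | rfl
    · exact (hfl v hvmem).1
    · exact (hfl v hvmem).2.1
  · intro p hp hdiag
    rw [Finset.mem_image] at hp
    obtain ⟨v, hvmem, rfl⟩ := hp
    rw [Set.Finite.mem_toFinset] at hvmem
    rw [hFv v hvmem, Sym2.mk_isDiag_iff] at hdiag
    exact (hfl v hvmem).2.2 hdiag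
  · intro p hp q hq hpq
    simp only [Finset.coe_image, Set.mem_image, Finset.mem_coe] at hp hq
    obtain ⟨v, hvmem, rfl⟩ := hp
    obtain ⟨w, hwmem, rfl⟩ := hq
    rw [Set.Finite.mem_toFinset] at hvmem hwmem
    exact hdisj v w hvmem hwmem (fun he => hpq (he ▸ rfl))
  · ext x
    constructor
    · rintro ⟨p, hp, htop⟩
      rw [Finset.mem_image] at hp
      obtain ⟨v, hvmem, rfl⟩ := hp
      rw [Set.Finite.mem_toFinset] at hvmem
      have htv : T.isTopOf v (F v) := by
        rw [hFv v hvmem, isTopOf_mk]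
        exact hflca v hvmem
      rwa [top_unique htop htv]
    · intro hx
      refine ⟨F x, ?_, ?_⟩
      · rw [Finset.mem_image]
        exact ⟨x, (Set.Finite.mem_toFinset hSfin).2 hx, rfl⟩
      · rw [hFv x hx, isTopOf_mk]
        exact hflca x hx

end RBT
namespace RBT

variable {V : Type} [Fintype V] [DecidableEq V]

/-- indicator vector of a subset of vertices, restricted to internal vertices. -/
noncomputable def iv (T : RBT V) (S : Set V) : {v : V // T.isInternal v} → ℝ :=
  fun v => Set.indicator S (fun _ => (1 : ℝ)) ↑v

variable {T : RBT V}

set_option linter.unusedSectionVars false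

lemma topVectors_eq : T.topVectors = T.iv '' {S : Set V | T.adm T.root S} := by
  ext x
  constructor
  · rintro ⟨P, rfl⟩
    exact ⟨P.topSet, topSet_adm P, rfl⟩
  · rintro ⟨S, hS, rfl⟩
    obtain ⟨P, hP⟩ := exists_pathSystem hS
    refine ⟨P, ?_⟩
    show (fun v : {v : V // T.isInternal v} =>
      Set.indicator P.topSet (fun _ => (1 : ℝ)) ↑v) = T.iv S
    rw [hP]; rfl

lemma iv_injOn : Set.InjOn T.iv {S : Set V | T.adm T.root S} := by
  intro S1 h1 S2 h2 he
  ext u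
  by_cases hint : T.isInternal u
  · have hval := congrFun he ⟨u, hint⟩
    simp only [iv] at hval
    by_cases hu1 : u ∈ S1 <;> by_cases hu2 : u ∈ S2
    · simp [hu1, hu2]
    · rw [Set.indicator_of_mem hu1, Set.indicator_of_notMem hu2] at hval
      exact absurd hval one_ne_zero
    · rw [Set.indicator_of_notMem hu1, Set.indicator_of_mem hu2] at hval
      exact absurd hval.symm one_ne_zero
    · simp [hu1, hu2]
  · constructor
    · intro hu; exact absurd (h1.1 u hu).2 hint
    · intro hu; exact absurd (h2.1 u hu).2 hint

lemma ncard_topVectors (n : ℕ) (hleaves : Nat.card {v : V // T.isLeaf v} = n) :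
    T.topVectors.ncard = Nat.fib (n + 1) := by
  rw [topVectors_eq, Set.ncard_image_of_injOn iv_injOn, ← Nat.card_coe_set_eq]
  have e1 : Nat.card {S : Set V | T.adm T.root S} = Nat.card {S : Set V // T.adm T.root S} :=
    Nat.card_congr (Equiv.subtypeEquivRight (fun _ => Iff.rfl))
  rw [e1, (count_eq T.root).1]
  congr 1
  have e2 : T.nl T.root = n := by
    rw [nl, ← hleaves]
    exact Nat.card_congr (Equiv.subtypeEquivRight (fun u =>
      ⟨fun h => h.1, fun h => ⟨h, desc_root u⟩⟩))
  rw [e2]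

lemma topVectors_binary {x : {v : V // T.isInternal v} → ℝ} (hx : x ∈ T.topVectors) :
    ∀ i, x i = 0 ∨ x i = 1 := by
  obtain ⟨P, rfl⟩ := hx
  intro i
  show Set.indicator P.topSet (fun _ => (1 : ℝ)) ↑i = 0 ∨
    Set.indicator P.topSet (fun _ => (1 : ℝ)) ↑i = 1
  by_cases h : (i : V) ∈ P.topSet
  · right; rw [Set.indicator_of_mem h]
  · left; rw [Set.indicator_of_notMem h]

lemma polytope_subset_box :
    T.cfnmcPolytope ⊆ {f : {v : V // T.isInternal v} → ℝ | ∀ i, 0 ≤ f i ∧ f i ≤ 1} := by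
  apply convexHull_min
  · intro x hx i
    rcases topVectors_binary hx i with h | h <;> rw [h] <;> norm_num
  · intro f hf g hg a b ha hb hab i
    have h1 := hf i
    have h2 := hg i
    simp only [Pi.add_apply, Pi.smul_apply, smul_eq_mul]
    constructor
    · have := mul_nonneg ha h1.1
      have := mul_nonneg hb h2.1
      linarith
    · have := mul_le_mul_of_nonneg_left h1.2 ha
      have := mul_le_mul_of_nonneg_left h2.2 hb
      nlinarith

lemma topVectors_extreme : T.topVectors = Set.extremePoints ℝ T.cfnmcPolytope := by
  apply Set.Subset.antisymm
  · intro x hx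
    rw [mem_extremePoints]
    refine ⟨subset_convexHull ℝ _ hx, ?_⟩
    intro y hy z hz hseg
    obtain ⟨a, b, ha, hb, hab, hxyz⟩ := hseg
    have hy' := polytope_subset_box hy
    have hz' := polytope_subset_box hz
    have key : y = x ∧ z = x := by
      constructor <;> funext i <;>
      · have hcoord : a * y i + b * z i = x i := by
          rw [← hxyz]; simp [smul_eq_mul]
        have hy1 := hy' i
        have hz1 := hz' i
        rcases topVectors_binary hx i with h | h <;> rw [h] <;> rw [h] at hcoord
        · nlinarith [mul_nonneg (le_of_lt ha) hy1.1, mul_nonneg (le_of_lt hb) hz1.1]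
        · nlinarith [mul_le_mul_of_nonneg_left hy1.2 (le_of_lt ha),
            mul_le_mul_of_nonneg_left hz1.2 (le_of_lt hb),
            mul_nonneg (le_of_lt ha) hy1.1, mul_nonneg (le_of_lt hb) hz1.1]
    exact key
  · exact extremePoints_convexHull_subset

end RBT

/-- Let `T` be a rooted binary tree with `n ≥ 2` leaves.  Then the CFN-MC
polytope `R_T` has exactly `F_n` vertices: the set of distinct top-vectors of systems of
disjoint paths in `T` has cardinality `F_n` (where `F_n = Nat.fib (n+1)`, i.e. the
Fibonacci numbers with `F_0 = F_1 = 1`), and this set is precisely the set of extreme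
points of `R_T`. -/
theorem cfnmc_vertices_fib {V : Type} [Fintype V] [DecidableEq V] (T : RBT V) (n : ℕ)
    (hn : 2 ≤ n) (hleaves : Nat.card {v : V // T.isLeaf v} = n) :
    T.topVectors.ncard = Nat.fib (n + 1) ∧
      T.topVectors = Set.extremePoints ℝ T.cfnmcPolytope := by
  exact ⟨RBT.ncard_topVectors n hleaves, RBT.topVectors_extreme⟩
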